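/- For k, l ≥ 1, the polynomial P_{k,l}(x,y) = x^{2k}(x−1)^{2l} + y² is irreducible in ℝ[x,y]. -/
import Mathlib


open MvPolynomial

/-- Auxiliary equivalence `ℝ[x] ≅ MvPolynomial (Fin 1) ℝ`. -/
noncomputable def gAux : MvPolynomial (Fin 1) ℝ ≃ₐ[ℝ] Polynomial ℝ :=
  (MvPolynomial.finSuccEquiv ℝ 0).trans
    (Polynomial.mapAlgEquiv (MvPolynomial.isEmptyAlgEquiv ℝ (Fin 0)))

/-- Auxiliary equivalence `ℝ[x,y] ≅ (ℝ[x])[y]`, sending `X 0 ↦ C X`, `X 1 ↦ X`. -/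
noncomputable def EAux : MvPolynomial (Fin 2) ℝ ≃ₐ[ℝ] Polynomial (Polynomial ℝ) :=
  (MvPolynomial.renameEquiv ℝ (Equiv.swap 0 1)).trans
    ((MvPolynomial.finSuccEquiv ℝ 1).trans (Polynomial.mapAlgEquiv gAux))

lemma gAux_X : gAux (X 0) = Polynomial.X := by
  simp [gAux, MvPolynomial.finSuccEquiv_X_zero]

lemma EAux_X0 : EAux (X 0 : MvPolynomial (Fin 2) ℝ) = Polynomial.C Polynomial.X := by
  have h : (1 : Fin 2) = Fin.succ 0 := rfl
  rw [EAux, AlgEquiv.trans_apply, AlgEquiv.trans_apply, renameEquiv_apply, rename_X,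
    Equiv.swap_apply_left, h, MvPolynomial.finSuccEquiv_X_succ]
  rw [show ⇑(Polynomial.mapAlgEquiv gAux)
      = Polynomial.map (gAux : MvPolynomial (Fin 1) ℝ →+* Polynomial ℝ) from rfl]
  rw [Polynomial.map_C]
  simp [gAux_X]

lemma EAux_X1 : EAux (X 1 : MvPolynomial (Fin 2) ℝ) = Polynomial.X := by
  rw [EAux, AlgEquiv.trans_apply, AlgEquiv.trans_apply, renameEquiv_apply, rename_X,
    Equiv.swap_apply_right, MvPolynomial.finSuccEquiv_X_zero]
  rw [show ⇑(Polynomial.mapAlgEquiv gAux)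
      = Polynomial.map (gAux : MvPolynomial (Fin 1) ℝ →+* Polynomial ℝ) from rfl]
  simp

open Polynomial in
lemma keyAux (k l : ℕ) :
    Irreducible ((Polynomial.C Polynomial.X) ^ (2*k) * (Polynomial.C Polynomial.X - 1) ^ (2*l)
      + Polynomial.X ^ 2 : Polynomial (Polynomial ℝ)) := by
  set c : Polynomial ℝ := Polynomial.X ^ (2*k) * (Polynomial.X - 1) ^ (2*l) with hc
  have hrw : ((Polynomial.C Polynomial.X) ^ (2*k) * (Polynomial.C Polynomial.X - 1) ^ (2*l)
      + Polynomial.X ^ 2 : Polynomial (Polynomial ℝ)) = Polynomial.X ^ 2 + Polynomial.C c := by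
    rw [hc]; push_cast [map_mul, map_pow, map_sub, map_one]; ring
  rw [hrw]
  have hmon : (Polynomial.X ^ 2 + Polynomial.C c : Polynomial (Polynomial ℝ)).Monic :=
    monic_X_pow_add_C c two_ne_zero
  rw [Polynomial.Monic.irreducible_iff_irreducible_map_fraction_map hmon
    (K := FractionRing (Polynomial ℝ))]
  have hmap : Polynomial.map (algebraMap (Polynomial ℝ) (FractionRing (Polynomial ℝ)))
      (Polynomial.X ^ 2 + Polynomial.C c)
      = Polynomial.X ^ 2
        - Polynomial.C (-(algebraMap (Polynomial ℝ) (FractionRing (Polynomial ℝ)) c)) := by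
    simp [sub_neg_eq_add]
  rw [hmap]
  apply X_pow_sub_C_irreducible_of_prime Nat.prime_two
  intro b hb
  have hint : IsIntegral (Polynomial ℝ) b := by
    refine ⟨Polynomial.X ^ 2 + Polynomial.C c, monic_X_pow_add_C c two_ne_zero, ?_⟩
    simp [Polynomial.eval₂_add, hb]
  obtain ⟨r, hr⟩ := IsIntegrallyClosed.isIntegral_iff.mp hint
  have hr2 : r ^ 2 = -c := by
    have hinj := IsFractionRing.injective (Polynomial ℝ) (FractionRing (Polynomial ℝ))
    apply hinj
    rw [map_pow, hr, hb, map_neg]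
  have := congrArg (Polynomial.eval (2 : ℝ)) hr2
  simp [hc] at this
  norm_num at this
  nlinarith [sq_nonneg (r.eval 2), pow_pos (by norm_num : (0:ℝ) < 2) (2*k)]

/-- For `k, l ≥ 1`, the polynomial `x^{2k}(x−1)^{2l} + y²` is irreducible in `ℝ[x,y]`. -/
theorem Pkl_irreducible (k l : ℕ) (hk : 1 ≤ k) (hl : 1 ≤ l) :
    Irreducible
      ((X 0) ^ (2 * k) * (X 0 - 1) ^ (2 * l) + (X 1) ^ 2 :
        MvPolynomial (Fin 2) ℝ) := by
  rw [← MulEquiv.irreducible_iff (EAux : MvPolynomial (Fin 2) ℝ ≃ₐ[ℝ] _)]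
  have : EAux ((X 0) ^ (2 * k) * (X 0 - 1) ^ (2 * l) + (X 1) ^ 2 : MvPolynomial (Fin 2) ℝ)
      = (Polynomial.C Polynomial.X) ^ (2*k) * (Polynomial.C Polynomial.X - 1) ^ (2*l)
        + Polynomial.X ^ 2 := by
    simp only [map_add, map_mul, map_pow, map_sub, map_one, EAux_X0, EAux_X1]
  rw [this]
  exact keyAux k l
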